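/- For any convex body K in a Minkowski space, the Jung ratio satisfies j(K) ≤ s(K)/(s(K)+1), i.e. R(K)·(s(K)+1) ≤ D(K)·s(K), where s(K) is the Minkowski asymmetry. -/

import Mathlib

open Set Pointwise

/-- `V n` is `ℝ^n` (as a Euclidean space, also used as carrier for general
Minkowski spaces whose unit ball `B` is given as a set). -/
abbrev V (n : ℕ) := EuclideanSpace ℝ (Fin n)

/-- A convex body: compact, convex, with nonempty interior. -/
def IsConvexBody {n : ℕ} (K : Set (V n)) : Prop :=
  Convex ℝ K ∧ IsCompact K ∧ (interior K).Nonempty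

/-- A (centrally) symmetric unit ball of a norm. -/
def IsSymUnitBall {n : ℕ} (B : Set (V n)) : Prop :=
  IsConvexBody B ∧ B = -B

/-- Circumradius of `K` with respect to the unit ball `B`. -/
noncomputable def circum {n : ℕ} (B K : Set (V n)) : ℝ :=
  sInf {ρ : ℝ | 0 < ρ ∧ ∃ c : V n, K ⊆ c +ᵥ ρ • B}

/-- Inradius of `K` with respect to the unit ball `B`. -/
noncomputable def inrad {n : ℕ} (B K : Set (V n)) : ℝ :=
  sSup {ρ : ℝ | 0 < ρ ∧ ∃ c : V n, c +ᵥ ρ • B ⊆ K}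

/-- Diameter of `K` in the norm with unit ball `B` (via the Minkowski gauge). -/
noncomputable def mdiam {n : ℕ} (B K : Set (V n)) : ℝ :=
  sSup {d : ℝ | ∃ x ∈ K, ∃ y ∈ K, d = gauge B (x - y)}

/-- Minkowski asymmetry of `K`. -/
noncomputable def asym {n : ℕ} (K : Set (V n)) : ℝ :=
  sInf {ρ : ℝ | 0 < ρ ∧ ∃ c : V n, -K ⊆ c +ᵥ ρ • K}

/-- `K` is complete (diametrically maximal) w.r.t. the unit ball `B`. -/
def IsCompleteBody {n : ℕ} (B K : Set (V n)) : Prop :=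
  IsConvexBody K ∧ ∀ x : V n, x ∉ K → mdiam B K < mdiam B (K ∪ {x})

/-- `Kstar` is a completion of `K` w.r.t. the unit ball `B`. -/
def IsCompletionOf {n : ℕ} (B Kstar K : Set (V n)) : Prop :=
  IsCompleteBody B Kstar ∧ K ⊆ Kstar ∧ mdiam B Kstar = mdiam B K

/-- Jung ratio `R(K)/D(K)`. -/
noncomputable def jungRatio {n : ℕ} (B K : Set (V n)) : ℝ :=
  circum B K / mdiam B K

/-- Jung constant of the Minkowski space with unit ball `B`. -/
noncomputable def jungConst {n : ℕ} (B : Set (V n)) : ℝ :=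
  sSup {j : ℝ | ∃ K : Set (V n), IsConvexBody K ∧ j = jungRatio B K}

/-- Maximal Minkowski asymmetry over complete bodies. -/
noncomputable def asymConst {n : ℕ} (B : Set (V n)) : ℝ :=
  sSup {s : ℝ | ∃ K : Set (V n), IsCompleteBody B K ∧ s = asym K}

/-- Banach–Mazur distance between `K` and `C`. -/
noncomputable def dBM {n : ℕ} (K C : Set (V n)) : ℝ :=
  sInf {ρ : ℝ | 0 < ρ ∧ ∃ (A : (V n) ≃ᵃ[ℝ] (V n)) (x : V n),
    K ⊆ A '' C ∧ A '' C ⊆ x +ᵥ ρ • K}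

/-- `S` is a `k`-dimensional simplex. -/
def IsSimplexDim {n : ℕ} (k : ℕ) (S : Set (V n)) : Prop :=
  ∃ v : Fin (k + 1) → V n, AffineIndependent ℝ v ∧ S = convexHull ℝ (Set.range v)

/-- Helly property with parameter `k` for translates of `B`. -/
def HellyProp {n : ℕ} (B : Set (V n)) (k : ℕ) : Prop :=
  ∀ X : Set (V n), X.Nonempty →
    (∀ J : Finset (V n), ↑J ⊆ X → J.card ≤ k + 1 →
      (⋂ x ∈ (J : Set (V n)), (x +ᵥ B)).Nonempty) →
    (⋂ x ∈ X, (x +ᵥ B)).Nonempty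

/-- Helly dimension of `B`: the least positive `k` with the Helly property. -/
noncomputable def hellyDim {n : ℕ} (B : Set (V n)) : ℕ :=
  sInf {k : ℕ | 0 < k ∧ HellyProp B k}

/-- `K` is of constant width w.r.t. the unit ball `B`: `K - K` is a dilate of `B`. -/
def IsConstWidth {n : ℕ} (B K : Set (V n)) : Prop :=
  ∃ γ : ℝ, 0 < γ ∧ K - K = γ • B

/-- A regular `n`-simplex in Euclidean space. -/
def IsRegularSimplex {n : ℕ} (T : Set (V n)) : Prop :=
  ∃ v : Fin (n + 1) → V n, AffineIndependent ℝ v ∧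
    (∀ i j k l, i ≠ j → k ≠ l → dist (v i) (v j) = dist (v k) (v l)) ∧
    T = convexHull ℝ (Set.range v)

/-- The Euclidean unit ball in `ℝ^n`. -/
noncomputable def euclBall (n : ℕ) : Set (V n) := Metric.closedBall 0 1

/-- Pseudo completion of `K` with respect to the circumcenter `c`. -/
noncomputable def pseudoCompletion {n : ℕ} (B K : Set (V n)) (c : V n) : Set (V n) :=
  convexHull ℝ (K ∪ (c +ᵥ (mdiam B K - circum B K) • B))

lemma zero_mem_int {n : ℕ} {B : Set (V n)} (hB : IsSymUnitBall B) :
    (0 : V n) ∈ interior B := by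
  obtain ⟨⟨hconv, hcomp, ⟨x, hx⟩⟩, hsym⟩ := hB
  have hx' : -x ∈ interior B := by
    have h1 : B = (-1:ℝ) • B := by rw [neg_smul_set, one_smul]; exact hsym
    have h2 : interior B = (-1:ℝ) • interior B := by
      conv_lhs => rw [h1, interior_smul₀ (by norm_num : (-1:ℝ) ≠ 0)]
    rw [h2]
    exact ⟨x, hx, by simp⟩
  have := hconv.interior hx hx' (by norm_num : (0:ℝ) ≤ 1/2)
    (by norm_num : (0:ℝ) ≤ 1/2) (by norm_num)
  simpa using this

lemma circum_le {n : ℕ} {B K : Set (V n)} (hB : IsSymUnitBall B)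
    {r : ℝ} (hr : 0 ≤ r) {c : V n} (h : ∀ x ∈ K, gauge B (x - c) ≤ r) :
    circum B K ≤ r := by
  have h0 : (0 : V n) ∈ interior B := zero_mem_int hB
  have habs : Absorbent ℝ B := absorbent_nhds_zero (mem_interior_iff_mem_nhds.mp h0)
  have h0B : (0 : V n) ∈ B := interior_subset h0
  refine le_of_forall_pos_le_add fun ε hε => ?_
  refine csInf_le ⟨0, fun ρ hρ => hρ.1.le⟩ ⟨by linarith, c, fun x hx => ?_⟩
  rw [Set.mem_vadd_set_iff_neg_vadd_mem]
  have hrε : (0:ℝ) < r + ε := by linarith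
  rw [mem_smul_set_iff_inv_smul_mem₀ hrε.ne']
  apply gauge_lt_one_subset_self hB.1.1 h0B habs
  have : gauge B ((r + ε)⁻¹ • (-c +ᵥ x)) = (r + ε)⁻¹ * gauge B (x - c) := by
    rw [gauge_smul_of_nonneg (by positivity)]
    simp [vadd_eq_add, neg_add_eq_sub, smul_eq_mul]
  rw [Set.mem_setOf_eq, this]
  calc (r + ε)⁻¹ * gauge B (x - c) ≤ (r + ε)⁻¹ * r :=
        mul_le_mul_of_nonneg_left (h x hx) (by positivity)
    _ < 1 := by rw [inv_mul_lt_iff₀ hrε]; linarith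

lemma mdiam_bddAbove {n : ℕ} {B K : Set (V n)} (hB : IsSymUnitBall B)
    (hK : IsConvexBody K) :
    BddAbove {d : ℝ | ∃ x ∈ K, ∃ y ∈ K, d = gauge B (x - y)} := by
  have h0 : (0 : V n) ∈ interior B := zero_mem_int hB
  obtain ⟨ε, hε, hball⟩ := Metric.mem_nhds_iff.mp (mem_interior_iff_mem_nhds.mp h0)
  have hcb : Metric.closedBall (0 : V n) (ε/2) ⊆ B :=
    (Metric.closedBall_subset_ball (by linarith)).trans hball
  obtain ⟨M, hM⟩ := hK.2.1.isBounded.subset_closedBall 0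
  refine ⟨(ε/2)⁻¹ * (|M| + |M|), ?_⟩
  rintro d ⟨x, hx, y, hy, rfl⟩
  have hxy : ‖x - y‖ ≤ |M| + |M| := by
    have h1 : ‖x‖ ≤ M := by simpa using hM hx
    have h2 : ‖y‖ ≤ M := by simpa using hM hy
    calc ‖x - y‖ ≤ ‖x‖ + ‖y‖ := norm_sub_le _ _
      _ ≤ |M| + |M| := by have := le_abs_self M; gcongr <;> linarith
  have hmem : x - y ∈ ((ε/2)⁻¹ * (|M| + |M|)) • B := by
    apply Set.smul_set_mono hcb
    rw [smul_closedBall _ _ (by positivity : (0:ℝ) ≤ ε/2)]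
    simp only [smul_zero, Metric.mem_closedBall, dist_zero_right]
    have hε2 : (ε/2) ≠ 0 := by positivity
    calc ‖x - y‖ ≤ |M| + |M| := hxy
      _ = ((ε/2)⁻¹ * (|M| + |M|)) * (ε/2) := by field_simp
      _ ≤ ‖(ε/2)⁻¹ * (|M| + |M|)‖ * (ε/2) := by
          rw [Real.norm_eq_abs]
          exact mul_le_mul_of_nonneg_right (le_abs_self _) (by positivity)
  exact gauge_le_of_mem (by positivity) hmem

lemma gauge_le_mdiam {n : ℕ} {B K : Set (V n)} (hB : IsSymUnitBall B)
    (hK : IsConvexBody K) {x y : V n} (hx : x ∈ K) (hy : y ∈ K) :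
    gauge B (x - y) ≤ mdiam B K :=
  le_csSup (mdiam_bddAbove hB hK) ⟨x, hx, y, hy, rfl⟩

lemma mdiam_nonneg {n : ℕ} {B K : Set (V n)} (hB : IsSymUnitBall B)
    (hK : IsConvexBody K) : 0 ≤ mdiam B K := by
  obtain ⟨x, hx⟩ := hK.2.2
  have hxK : x ∈ K := interior_subset hx
  have := gauge_le_mdiam hB hK hxK hxK
  simpa using this

lemma key {n : ℕ} {B K : Set (V n)} (hB : IsSymUnitBall B)
    (hK : IsConvexBody K) {ρ : ℝ} (hρ : 0 < ρ) {z : V n}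
    (h : -K ⊆ z +ᵥ ρ • K) :
    circum B K * (ρ + 1) ≤ mdiam B K * ρ := by
  set D := mdiam B K with hD
  have hD0 : 0 ≤ D := mdiam_nonneg hB hK
  have hρ1 : (0:ℝ) < ρ + 1 := by linarith
  set r : ℝ := (ρ / (ρ + 1)) * D with hr
  have hr0 : 0 ≤ r := by positivity
  have hcir : circum B K ≤ r := by
    refine circum_le hB hr0 (c := -((ρ+1)⁻¹ • z)) fun x hx => ?_
    have hxz : (-x) ∈ z +ᵥ ρ • K := h (Set.neg_mem_neg.mpr hx)
    rw [Set.mem_vadd_set_iff_neg_vadd_mem,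
      mem_smul_set_iff_inv_smul_mem₀ hρ.ne'] at hxz
    set y : V n := ρ⁻¹ • (-z +ᵥ -x) with hy
    have hyK : y ∈ K := hxz
    have heq : x - -((ρ+1)⁻¹ • z) = (ρ / (ρ + 1)) • (x - y) := by
      rw [hy]
      simp only [vadd_eq_add]
      match_scalars <;> field_simp <;> ring
    rw [heq, gauge_smul_of_nonneg (by positivity), smul_eq_mul]
    exact mul_le_mul_of_nonneg_left (gauge_le_mdiam hB hK hx hyK) (by positivity)
  calc circum B K * (ρ + 1) ≤ r * (ρ + 1) :=
        mul_le_mul_of_nonneg_right hcir hρ1.le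
    _ = D * ρ := by
        rw [hr, div_mul_eq_mul_div, div_mul_cancel₀ _ hρ1.ne']; ring

lemma asym_set_nonempty {n : ℕ} {K : Set (V n)} (hK : IsConvexBody K) :
    {ρ : ℝ | 0 < ρ ∧ ∃ c : V n, -K ⊆ c +ᵥ ρ • K}.Nonempty := by
  obtain ⟨p, hp⟩ := hK.2.2
  obtain ⟨ε, hε, hball⟩ := Metric.mem_nhds_iff.mp (mem_interior_iff_mem_nhds.mp hp)
  have hcb : Metric.closedBall p (ε/2) ⊆ K :=
    (Metric.closedBall_subset_ball (by linarith)).trans hball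
  obtain ⟨M₀, hM₀⟩ := hK.2.1.isBounded.subset_closedBall 0
  set M : ℝ := |M₀| + ‖p‖ + ε/2 with hM
  have hMpos : 0 < M := by positivity
  have hbound : ∀ x ∈ K, ‖x - p‖ ≤ M := by
    intro x hx
    have h1 : ‖x‖ ≤ M₀ := by simpa using hM₀ hx
    calc ‖x - p‖ ≤ ‖x‖ + ‖p‖ := norm_sub_le _ _
      _ ≤ M := by have h2 := le_abs_self M₀; rw [hM]; linarith
  set ρ : ℝ := M / (ε/2) with hρdef
  have hρ : 0 < ρ := by positivity
  refine ⟨ρ, hρ, -p - ρ • p, ?_⟩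
  intro w hw
  rw [Set.mem_neg] at hw
  set x := -w with hxw
  have hxK : x ∈ K := hw
  rw [Set.mem_vadd_set_iff_neg_vadd_mem, mem_smul_set_iff_inv_smul_mem₀ hρ.ne']
  have hwx : w = -x := by rw [hxw, neg_neg]
  have heq : ρ⁻¹ • (-(-p - ρ • p) +ᵥ w) = p + ρ⁻¹ • (p - x) := by
    rw [hwx]
    simp only [vadd_eq_add]
    match_scalars <;> field_simp <;> ring
  rw [heq]
  apply hcb
  rw [Metric.mem_closedBall, dist_eq_norm]
  have : p + ρ⁻¹ • (p - x) - p = ρ⁻¹ • (p - x) := by abel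
  rw [this, norm_smul, Real.norm_eq_abs, abs_of_pos (by positivity)]
  have h1 : ‖p - x‖ ≤ M := by rw [norm_sub_rev]; exact hbound x hxK
  have h2 : ρ⁻¹ = (ε/2) / M := by rw [hρdef]; field_simp
  rw [h2]
  calc (ε/2) / M * ‖p - x‖ ≤ (ε/2) / M * M :=
        mul_le_mul_of_nonneg_left h1 (by positivity)
    _ = ε/2 := by field_simp

lemma stmt18' {n : ℕ} (B K : Set (V n)) (hB : IsSymUnitBall B)
    (hK : IsConvexBody K) :
    circum B K * (asym K + 1) ≤ mdiam B K * asym K := by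
  set S := {ρ : ℝ | 0 < ρ ∧ ∃ c : V n, -K ⊆ c +ᵥ ρ • K} with hS
  have hne : S.Nonempty := asym_set_nonempty hK
  have hbdd : BddBelow S := ⟨0, fun ρ hρ => hρ.1.le⟩
  have hkey : ∀ ρ ∈ S, circum B K * (ρ + 1) ≤ mdiam B K * ρ := by
    rintro ρ ⟨hρ, z, hz⟩
    exact key hB hK hρ hz
  have hC0 : 0 ≤ circum B K := Real.sInf_nonneg fun ρ hρ => hρ.1.le
  have hs0 : 0 ≤ asym K := Real.sInf_nonneg fun ρ hρ => hρ.1.le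
  have hD0 : 0 ≤ mdiam B K := mdiam_nonneg hB hK
  rcases lt_or_ge (circum B K) (mdiam B K) with hlt | hle
  · set a := mdiam B K - circum B K with ha
    have ha0 : 0 < a := by simp only [ha]; linarith
    have hlow : circum B K / a ≤ asym K := by
      apply le_csInf hne
      intro ρ hρ
      have := hkey ρ hρ
      rw [div_le_iff₀ ha0]
      have hρ0 : 0 < ρ := hρ.1
      nlinarith
    have : circum B K ≤ a * asym K := by
      rw [div_le_iff₀ ha0] at hlow
      linarith [hlow]
    simp only [ha] at this
    nlinarith
  · obtain ⟨ρ₀, hρ₀⟩ := hne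
    have h1 := hkey ρ₀ hρ₀
    have hρ₀0 : 0 < ρ₀ := hρ₀.1
    have hC : circum B K ≤ 0 := by nlinarith
    have hCeq : circum B K = 0 := le_antisymm hC hC0
    rw [hCeq]
    nlinarith


/-- `j(K) ≤ s(K)/(s(K)+1)`, i.e. `R(K)(s(K)+1) ≤ D(K)s(K)`. -/
theorem stmt18 {n : ℕ} (B K : Set (V n)) (hB : IsSymUnitBall B)
    (hK : IsConvexBody K) :
    circum B K * (asym K + 1) ≤ mdiam B K * asym K :=
  stmt18' B K hB hK
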